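/- Let p, q and s be bounded exponents in Ω with 1/s = 1/p + 1/q pointwise. Then for all f ∈ L^{p(·)}(Ω) and g ∈ L^{q(·)}(Ω) one has fg ∈ L^{s(·)}(Ω) and ‖fg‖_{L^{s(·)}(Ω)} ≤ 2 ‖f‖_{L^{p(·)}(Ω)} ‖g‖_{L^{q(·)}(Ω)}. -/

import Mathlib

open MeasureTheory Filter Topology Metric Set
open scoped ENNReal NNReal

noncomputable section

namespace VarExp

/-- `n`-dimensional Euclidean space. -/
abbrev Eu (n : ℕ) := EuclideanSpace ℝ (Fin n)

variable {n : ℕ}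

/-- The modular of the variable exponent Lebesgue space `L^{p(·)}(Ω)`. -/
def vMod (Ω : Set (Eu n)) (p f : Eu n → ℝ) : ℝ≥0∞ :=
  ∫⁻ x in Ω, ENNReal.ofReal (|f x| ^ p x)

/-- The Luxemburg norm `‖f‖_{L^{p(·)}(Ω)}`. -/
def vNorm (Ω : Set (Eu n)) (p f : Eu n → ℝ) : ℝ :=
  sInf {l : ℝ | 0 < l ∧ vMod Ω p (fun x => f x / l) ≤ 1}

/-- Membership in `L^{p(·)}(Ω)`. -/
def MemVL (Ω : Set (Eu n)) (p f : Eu n → ℝ) : Prop :=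
  AEMeasurable f (volume.restrict Ω) ∧ vMod Ω p f < ⊤

/-- `p` is a bounded exponent on `Ω`: measurable, `1 ≤ p` and `p⁺ = sup p < ∞`. -/
def IsBddExp (Ω : Set (Eu n)) (p : Eu n → ℝ) : Prop :=
  Measurable p ∧ (∀ x ∈ Ω, 1 ≤ p x) ∧ BddAbove (p '' Ω)

/-- `p⁻ = inf p` over `Ω`. -/
def pm (Ω : Set (Eu n)) (p : Eu n → ℝ) : ℝ := sInf (p '' Ω)

/-- `p⁺ = sup p` over `Ω`. -/
def pP (Ω : Set (Eu n)) (p : Eu n → ℝ) : ℝ := sSup (p '' Ω)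

/-- The pointwise conjugate exponent `p' = p/(p-1)`. -/
def conj (p : Eu n → ℝ) : Eu n → ℝ := fun x => p x / (p x - 1)

/-- local log-Hölder continuity on `Ω` -/
def LogHolder (Ω : Set (Eu n)) (p : Eu n → ℝ) : Prop :=
  ∃ C : ℝ, 0 ≤ C ∧ ∀ x ∈ Ω, ∀ y ∈ Ω,
    |p x - p y| ≤ C / Real.log (Real.exp 1 + ‖x - y‖⁻¹)

/-- The class `P^log(Ω)`: log-Hölder continuity together with (if `Ω` is unbounded)
    the log-Hölder decay condition at infinity towards a limit value `pinf`. -/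
def PLog (Ω : Set (Eu n)) (p : Eu n → ℝ) : Prop :=
  LogHolder Ω p ∧
    (Bornology.IsBounded Ω ∨ ∃ pinf C : ℝ, 0 ≤ C ∧
      ∀ x ∈ Ω, |p x - pinf| ≤ C / Real.log (Real.exp 1 + ‖x‖))

/-- Test functions: smooth compactly supported functions with support inside `Ω`. -/
def IsTest (Ω : Set (Eu n)) (φ : Eu n → ℝ) : Prop :=
  ContDiff ℝ (⊤ : ℕ∞) φ ∧ HasCompactSupport φ ∧ tsupport φ ⊆ Ω

/-- classical `i`-th partial derivative -/
def pd (i : Fin n) (φ : Eu n → ℝ) (x : Eu n) : ℝ :=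
  fderiv ℝ φ x (EuclideanSpace.single i (1 : ℝ))

/-- second order classical partial derivative `∂_i ∂_j` -/
def pd2 (i j : Fin n) (φ : Eu n → ℝ) : Eu n → ℝ := pd i (pd j φ)

/-- classical gradient, as a `Fin n`-indexed family -/
def sgrad (φ : Eu n → ℝ) : Eu n → Fin n → ℝ := fun x i => pd i φ x

/-- Euclidean norm of a finite family of reals. -/
def fnorm {ι : Type*} [Fintype ι] (a : ι → ℝ) : ℝ := Real.sqrt (∑ i, (a i) ^ 2)

/-- `L^{p(·)}` norm of a vector valued function -/
def vNormV (Ω : Set (Eu n)) (p : Eu n → ℝ) (v : Eu n → Fin n → ℝ) : ℝ :=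
  vNorm Ω p fun x => fnorm (v x)

/-- `L^{p(·)}` norm of a matrix valued function -/
def vNormM (Ω : Set (Eu n)) (p : Eu n → ℝ) (M : Eu n → Fin n → Fin n → ℝ) : ℝ :=
  vNorm Ω p fun x => fnorm fun q : Fin n × Fin n => M x q.1 q.2

/-- `L^{p(·)}` norm of a third order tensor valued function -/
def vNormT (Ω : Set (Eu n)) (p : Eu n → ℝ)
    (M : Eu n → Fin n → Fin n → Fin n → ℝ) : ℝ :=
  vNorm Ω p fun x => fnorm fun q : Fin n × Fin n × Fin n => M x q.1 q.2.1 q.2.2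

def MemVLV (Ω : Set (Eu n)) (p : Eu n → ℝ) (v : Eu n → Fin n → ℝ) : Prop :=
  ∀ r, MemVL Ω p fun x => v x r

def MemVLM (Ω : Set (Eu n)) (p : Eu n → ℝ) (M : Eu n → Fin n → Fin n → ℝ) : Prop :=
  ∀ r i, MemVL Ω p fun x => M x r i

def MemVLT (Ω : Set (Eu n)) (p : Eu n → ℝ) (M : Eu n → Fin n → Fin n → Fin n → ℝ) : Prop :=
  ∀ r i j, MemVL Ω p fun x => M x r i j

/-- `g` is the `i`-th weak (distributional) partial derivative of `f` on `Ω`. -/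
def IsWeakPD (Ω : Set (Eu n)) (i : Fin n) (f g : Eu n → ℝ) : Prop :=
  ∀ φ, IsTest Ω φ → ∫ x in Ω, f x * pd i φ x = - ∫ x in Ω, g x * φ x

/-- `Df` is the weak gradient of `f` on `Ω`. -/
def IsWeakGrad (Ω : Set (Eu n)) (f : Eu n → ℝ) (Df : Eu n → Fin n → ℝ) : Prop :=
  ∀ i, IsWeakPD Ω i f fun x => Df x i

/-- `D2f` is the weak Hessian of `f` (whose weak gradient is `Df`) on `Ω`. -/
def IsWeakHess (Ω : Set (Eu n)) (Df : Eu n → Fin n → ℝ)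
    (D2f : Eu n → Fin n → Fin n → ℝ) : Prop :=
  ∀ i j, IsWeakPD Ω j (fun x => Df x i) fun x => D2f x i j

/-- weak gradient of a vector field -/
def IsWeakGradV (Ω : Set (Eu n)) (v : Eu n → Fin n → ℝ)
    (Dv : Eu n → Fin n → Fin n → ℝ) : Prop :=
  ∀ r, IsWeakGrad Ω (fun x => v x r) fun x => Dv x r

/-- weak Hessian of a vector field -/
def IsWeakHessV (Ω : Set (Eu n)) (Dv : Eu n → Fin n → Fin n → ℝ)
    (D2v : Eu n → Fin n → Fin n → Fin n → ℝ) : Prop :=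
  ∀ r, IsWeakHess Ω (fun x => Dv x r) fun x => D2v x r

/-- iterated classical partial derivative along a multi-index `γ` -/
def iterPD : {k : ℕ} → (Fin k → Fin n) → (Eu n → ℝ) → (Eu n → ℝ)
  | 0, _, φ => φ
  | (_ + 1), γ, φ => iterPD (fun j => γ j.succ) (pd (γ 0) φ)

/-- `D` is the full `k`-th order weak derivative tensor of `u` on `Ω`. -/
def IsWeakIter (Ω : Set (Eu n)) (k : ℕ) (u : Eu n → ℝ)
    (D : (Fin k → Fin n) → Eu n → ℝ) : Prop :=
  ∀ (γ : Fin k → Fin n) (φ : Eu n → ℝ), IsTest Ω φ →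
    ∫ x in Ω, u x * iterPD γ φ x = (-1 : ℝ) ^ k * ∫ x in Ω, D γ x * φ x

/-- the `W^{1,p(·)}(Ω)` norm of a scalar function with weak gradient `Df` -/
def W1nS (Ω : Set (Eu n)) (p : Eu n → ℝ) (f : Eu n → ℝ) (Df : Eu n → Fin n → ℝ) : ℝ :=
  vNorm Ω p f + vNormV Ω p Df

/-- the `W^{2,p(·)}(Ω)` norm of a scalar function -/
def W2nS (Ω : Set (Eu n)) (p : Eu n → ℝ) (f : Eu n → ℝ) (Df : Eu n → Fin n → ℝ)
    (D2f : Eu n → Fin n → Fin n → ℝ) : ℝ :=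
  vNorm Ω p f + vNormV Ω p Df + vNormM Ω p D2f

/-- the `W^{1,p(·)}(Ω)` norm of a vector field -/
def W1nV (Ω : Set (Eu n)) (p : Eu n → ℝ) (v : Eu n → Fin n → ℝ)
    (Dv : Eu n → Fin n → Fin n → ℝ) : ℝ :=
  vNormV Ω p v + vNormM Ω p Dv

/-- the `W^{2,p(·)}(Ω)` norm of a vector field -/
def W2nV (Ω : Set (Eu n)) (p : Eu n → ℝ) (v : Eu n → Fin n → ℝ)
    (Dv : Eu n → Fin n → Fin n → ℝ) (D2v : Eu n → Fin n → Fin n → Fin n → ℝ) : ℝ :=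
  vNormV Ω p v + vNormM Ω p Dv + vNormT Ω p D2v

/-- membership in `W^{1,p(·)}(Ω)` (scalar), with the weak gradient recorded -/
def MemW1S (Ω : Set (Eu n)) (p : Eu n → ℝ) (f : Eu n → ℝ) (Df : Eu n → Fin n → ℝ) : Prop :=
  MemVL Ω p f ∧ IsWeakGrad Ω f Df ∧ MemVLV Ω p Df

/-- membership in `W^{2,p(·)}(Ω)` (scalar) -/
def MemW2S (Ω : Set (Eu n)) (p : Eu n → ℝ) (f : Eu n → ℝ) (Df : Eu n → Fin n → ℝ)
    (D2f : Eu n → Fin n → Fin n → ℝ) : Prop :=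
  MemW1S Ω p f Df ∧ IsWeakHess Ω Df D2f ∧ MemVLM Ω p D2f

/-- membership in `W^{1,p(·)}(Ω)` (vector) -/
def MemW1V (Ω : Set (Eu n)) (p : Eu n → ℝ) (v : Eu n → Fin n → ℝ)
    (Dv : Eu n → Fin n → Fin n → ℝ) : Prop :=
  MemVLV Ω p v ∧ IsWeakGradV Ω v Dv ∧ MemVLM Ω p Dv

/-- membership in `W^{2,p(·)}(Ω)` (vector) -/
def MemW2V (Ω : Set (Eu n)) (p : Eu n → ℝ) (v : Eu n → Fin n → ℝ)
    (Dv : Eu n → Fin n → Fin n → ℝ) (D2v : Eu n → Fin n → Fin n → Fin n → ℝ) : Prop :=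
  MemW1V Ω p v Dv ∧ IsWeakHessV Ω Dv D2v ∧ MemVLT Ω p D2v

/-- the norm of a (scalar, function-represented) element of `W^{-1,p(·)}(Ω)`,
    i.e. the dual norm with respect to the `W^{1,p'(·)}_0(Ω)` norm. -/
def WmNormS (Ω : Set (Eu n)) (p : Eu n → ℝ) (f : Eu n → ℝ) : ℝ :=
  sSup {s | ∃ φ, IsTest Ω φ ∧ W1nS Ω (conj p) φ (sgrad φ) ≤ 1 ∧
    s = ∫ x in Ω, f x * φ x}

/-- the `(W^{-1,p(·)}(Ω))ⁿ` norm of a function-represented vector field -/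
def WmNormV (Ω : Set (Eu n)) (p : Eu n → ℝ) (f : Eu n → Fin n → ℝ) : ℝ :=
  sSup {s | ∃ φ : Fin n → Eu n → ℝ, (∀ r, IsTest Ω (φ r)) ∧
    vNormV Ω (conj p) (fun x r => φ r x) +
      vNormM Ω (conj p) (fun x r i => pd i (φ r) x) ≤ 1 ∧
    s = ∑ r, ∫ x in Ω, f x r * φ r x}

/-- the `D^{-1,p(·)}(Ω)` norm of a function-represented element
    (dual norm with respect to `‖∇·‖_{p'(·)}`) -/
def DmNormS (Ω : Set (Eu n)) (p : Eu n → ℝ) (f : Eu n → ℝ) : ℝ :=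
  sSup {s | ∃ φ, IsTest Ω φ ∧ vNormV Ω (conj p) (sgrad φ) ≤ 1 ∧
    s = ∫ x in Ω, f x * φ x}

/-- the `(D^{-1,p(·)}(Ω))ⁿ` norm of a function-represented vector field -/
def DmNormV (Ω : Set (Eu n)) (p : Eu n → ℝ) (f : Eu n → Fin n → ℝ) : ℝ :=
  sSup {s | ∃ φ : Fin n → Eu n → ℝ, (∀ r, IsTest Ω (φ r)) ∧
    vNormM Ω (conj p) (fun x r i => pd i (φ r) x) ≤ 1 ∧
    s = ∑ r, ∫ x in Ω, f x r * φ r x}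

/-- A functional on (vector) test functions representing an element of
    `(W^{-1,p(·)}(Ω))ⁿ = ((W_0^{1,p'(·)}(Ω))ⁿ)'`. -/
def MemWmF (Ω : Set (Eu n)) (p : Eu n → ℝ) (T : (Fin n → Eu n → ℝ) → ℝ) : Prop :=
  (∀ (a b : ℝ) (φ ψ : Fin n → Eu n → ℝ), (∀ r, IsTest Ω (φ r)) → (∀ r, IsTest Ω (ψ r)) →
    T (fun r x => a * φ r x + b * ψ r x) = a * T φ + b * T ψ) ∧
  ∃ M : ℝ, 0 ≤ M ∧ ∀ φ : Fin n → Eu n → ℝ, (∀ r, IsTest Ω (φ r)) →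
    |T φ| ≤ M * (vNormV Ω (conj p) (fun x r => φ r x) +
      vNormM Ω (conj p) (fun x r i => pd i (φ r) x))

/-- the `(W^{-1,p(·)}(Ω))ⁿ` norm of such a functional -/
def WmNormF (Ω : Set (Eu n)) (p : Eu n → ℝ) (T : (Fin n → Eu n → ℝ) → ℝ) : ℝ :=
  sSup {s | ∃ φ : Fin n → Eu n → ℝ, (∀ r, IsTest Ω (φ r)) ∧
    vNormV Ω (conj p) (fun x r => φ r x) +
      vNormM Ω (conj p) (fun x r i => pd i (φ r) x) ≤ 1 ∧ s = T φ}

/-- A functional on (scalar) test functions representing an element of `W^{-1,p(·)}(Ω)`. -/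
def MemWmFS (Ω : Set (Eu n)) (p : Eu n → ℝ) (T : (Eu n → ℝ) → ℝ) : Prop :=
  (∀ (a b : ℝ) (φ ψ : Eu n → ℝ), IsTest Ω φ → IsTest Ω ψ →
    T (fun x => a * φ x + b * ψ x) = a * T φ + b * T ψ) ∧
  ∃ M : ℝ, 0 ≤ M ∧ ∀ φ, IsTest Ω φ → |T φ| ≤ M * W1nS Ω (conj p) φ (sgrad φ)

def WmNormFS (Ω : Set (Eu n)) (p : Eu n → ℝ) (T : (Eu n → ℝ) → ℝ) : ℝ :=
  sSup {s | ∃ φ, IsTest Ω φ ∧ W1nS Ω (conj p) φ (sgrad φ) ≤ 1 ∧ s = T φ}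

/-- A functional on vector test functions representing an element of
    `(D^{-1,p(·)}(Ω))ⁿ = ((D_0^{1,p'(·)}(Ω))ⁿ)'`. -/
def MemDmF (Ω : Set (Eu n)) (p : Eu n → ℝ) (T : (Fin n → Eu n → ℝ) → ℝ) : Prop :=
  (∀ (a b : ℝ) (φ ψ : Fin n → Eu n → ℝ), (∀ r, IsTest Ω (φ r)) → (∀ r, IsTest Ω (ψ r)) →
    T (fun r x => a * φ r x + b * ψ r x) = a * T φ + b * T ψ) ∧
  ∃ M : ℝ, 0 ≤ M ∧ ∀ φ : Fin n → Eu n → ℝ, (∀ r, IsTest Ω (φ r)) →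
    |T φ| ≤ M * vNormM Ω (conj p) (fun x r i => pd i (φ r) x)

def DmNormF (Ω : Set (Eu n)) (p : Eu n → ℝ) (T : (Fin n → Eu n → ℝ) → ℝ) : ℝ :=
  sSup {s | ∃ φ : Fin n → Eu n → ℝ, (∀ r, IsTest Ω (φ r)) ∧
    vNormM Ω (conj p) (fun x r i => pd i (φ r) x) ≤ 1 ∧ s = T φ}

/-- `u ∈ W_0^{1,p(·)}(Ω)`-style vanishing of the boundary values (zero trace):
    `u` (with weak gradient `Du`) can be approximated by test functions in the
    `W^{1,p(·)}(Ω)` norm. -/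
def ZeroTrace (Ω : Set (Eu n)) (p : Eu n → ℝ) (u : Eu n → ℝ) (Du : Eu n → Fin n → ℝ) : Prop :=
  ∀ ε : ℝ, 0 < ε → ∃ φ, IsTest Ω φ ∧
    vNorm Ω p (fun x => u x - φ x) + vNormV Ω p (fun x i => Du x i - pd i φ x) < ε

def ZeroTraceV (Ω : Set (Eu n)) (p : Eu n → ℝ) (v : Eu n → Fin n → ℝ)
    (Dv : Eu n → Fin n → Fin n → ℝ) : Prop :=
  ∀ r, ZeroTrace Ω p (fun x => v x r) fun x => Dv x r

/-- the norm of the trace space `tr(W^{1,p(·)}(Ω))` of the boundary datum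
    realized by `u₀` -/
def trNormW1S (Ω : Set (Eu n)) (p : Eu n → ℝ) (u₀ : Eu n → ℝ)
    (Du₀ : Eu n → Fin n → ℝ) : ℝ :=
  sInf {s | ∃ u Du, MemW1S Ω p u Du ∧
    ZeroTrace Ω p (fun x => u x - u₀ x) (fun x i => Du x i - Du₀ x i) ∧
    s = W1nS Ω p u Du}

def trNormW2S (Ω : Set (Eu n)) (p : Eu n → ℝ) (u₀ : Eu n → ℝ)
    (Du₀ : Eu n → Fin n → ℝ) (D2u₀ : Eu n → Fin n → Fin n → ℝ) : ℝ :=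
  sInf {s | ∃ u Du D2u, MemW2S Ω p u Du D2u ∧
    ZeroTrace Ω p (fun x => u x - u₀ x) (fun x i => Du x i - Du₀ x i) ∧
    s = W2nS Ω p u Du D2u}

def trNormW1V (Ω : Set (Eu n)) (p : Eu n → ℝ) (u₀ : Eu n → Fin n → ℝ)
    (Du₀ : Eu n → Fin n → Fin n → ℝ) : ℝ :=
  sInf {s | ∃ u Du, MemW1V Ω p u Du ∧
    ZeroTraceV Ω p (fun x r => u x r - u₀ x r) (fun x r i => Du x r i - Du₀ x r i) ∧
    s = W1nV Ω p u Du}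

def trNormW2V (Ω : Set (Eu n)) (p : Eu n → ℝ) (u₀ : Eu n → Fin n → ℝ)
    (Du₀ : Eu n → Fin n → Fin n → ℝ) (D2u₀ : Eu n → Fin n → Fin n → Fin n → ℝ) : ℝ :=
  sInf {s | ∃ u Du D2u, MemW2V Ω p u Du D2u ∧
    ZeroTraceV Ω p (fun x r => u x r - u₀ x r) (fun x r i => Du x r i - Du₀ x r i) ∧
    s = W2nV Ω p u Du D2u}

/-- the last coordinate `x_n` of a point of `ℝⁿ` -/
def lastc (x : Eu n) : ℝ := if h : 0 < n then x ⟨n - 1, Nat.sub_lt h Nat.one_pos⟩ else 0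

/-- the open upper half-space `ℝⁿ_>` -/
def upper (n : ℕ) : Set (Eu n) := {x | 0 < lastc x}

/-- the hyperplane `Σ = ∂ℝⁿ_>` -/
def Sig (n : ℕ) : Set (Eu n) := {x | lastc x = 0}

/-- the index of the last coordinate -/
def idxn (n : ℕ) (h : 0 < n) : Fin n := ⟨n - 1, Nat.sub_lt h Nat.one_pos⟩

/-- zero boundary values on `Σ` of a function on the half space, expressed through
    the Gauß–Green formula: `∫ (u ∂_i φ + ∂_i u φ) = 0` for all smooth compactly
    supported `φ` (on all of `ℝⁿ`) and all `i`. -/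
def ZeroTraceHalf (u : Eu n → ℝ) (Du : Eu n → Fin n → ℝ) : Prop :=
  ∀ φ : Eu n → ℝ, ContDiff ℝ (⊤ : ℕ∞) φ → HasCompactSupport φ → ∀ i,
    ∫ x in upper n, (u x * pd i φ x + Du x i * φ x) = 0

def ZeroTraceHalfV (v : Eu n → Fin n → ℝ) (Dv : Eu n → Fin n → Fin n → ℝ) : Prop :=
  ∀ r, ZeroTraceHalf (fun x => v x r) fun x => Dv x r

/-- a domain: a nonempty connected open set -/
def IsDomain (Ω : Set (Eu n)) : Prop := IsOpen Ω ∧ IsConnected Ω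

/-- the point `(x', t) ∈ ℝⁿ` built from `x' ∈ ℝ^{n-1}` and a last coordinate `t` -/
def graphPt (x' : Eu (n - 1)) (t : ℝ) : Eu n :=
  (EuclideanSpace.equiv (Fin n) ℝ).symm fun i => if h : (i : ℕ) < n - 1 then x' ⟨i, h⟩ else t

/-- the graph piece `{(x', a(x')) : |x'| < α}` -/
def graphSet (a : Eu (n - 1) → ℝ) (α : ℝ) : Set (Eu n) :=
  {z | ∃ x', ‖x'‖ < α ∧ z = graphPt x' (a x')}

/-- the piece `{(x', t) : |x'| < α, a(x') < t < a(x') + β}` above the graph -/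
def aboveSet (a : Eu (n - 1) → ℝ) (α β : ℝ) : Set (Eu n) :=
  {z | ∃ x' t, ‖x'‖ < α ∧ a x' < t ∧ t < a x' + β ∧ z = graphPt x' t}

/-- the piece `{(x', t) : |x'| < α, a(x') - β < t < a(x')}` below the graph -/
def belowSet (a : Eu (n - 1) → ℝ) (α β : ℝ) : Set (Eu n) :=
  {z | ∃ x' t, ‖x'‖ < α ∧ a x' - β < t ∧ t < a x' ∧ z = graphPt x' t}

/-- `C^{1,1}` boundary chart data of `Ω` at the boundary point `xb`. -/
structure C11Chart (Ω : Set (Eu n)) (xb : Eu n) where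
  G : Eu n ≃ᵃⁱ[ℝ] Eu n
  a : Eu (n - 1) → ℝ
  α : ℝ
  β : ℝ
  L : ℝ≥0
  hα : 0 < α
  hβ : 0 < β
  hG : G 0 = xb
  ha0 : a 0 = 0
  hdiff : ContDiffOn ℝ 1 a (ball 0 α)
  hda0 : fderivWithin ℝ a (ball 0 α) 0 = 0
  hlip : LipschitzOnWith L (fderivWithin ℝ a (ball 0 α)) (ball 0 α)
  hgraph : G '' graphSet a α ⊆ frontier Ω
  habove : G '' aboveSet a α β ⊆ Ω
  hbelow : G '' belowSet a α β ⊆ (closure Ω)ᶜ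

/-- `Ω` has a `C^{1,1}` boundary. -/
def HasC11Boundary (Ω : Set (Eu n)) : Prop := ∀ xb ∈ frontier Ω, Nonempty (C11Chart Ω xb)

/-- Lipschitz boundary chart data of `Ω` at the boundary point `xb`. -/
structure LipChart (Ω : Set (Eu n)) (xb : Eu n) where
  G : Eu n ≃ᵃⁱ[ℝ] Eu n
  a : Eu (n - 1) → ℝ
  α : ℝ
  β : ℝ
  L : ℝ≥0
  hα : 0 < α
  hβ : 0 < β
  hG : G 0 = xb
  ha0 : a 0 = 0
  hlip : LipschitzOnWith L a (ball 0 α)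
  hgraph : G '' graphSet a α ⊆ frontier Ω
  habove : G '' aboveSet a α β ⊆ Ω
  hbelow : G '' belowSet a α β ⊆ (closure Ω)ᶜ

/-- `Ω` has a Lipschitz continuous boundary. -/
def HasLipschitzBoundary (Ω : Set (Eu n)) : Prop :=
  ∀ xb ∈ frontier Ω, Nonempty (LipChart Ω xb)

/-- fundamental solution kernel `V^{rl}` of the Stokes system -/
def Vker (n : ℕ) (r l : Fin n) (x : Eu n) : ℝ :=
  (1 / ((n : ℝ) - 2)) * (if r = l then 1 else 0) / ‖x‖ ^ (n - 2) + x r * x l / ‖x‖ ^ n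

/-- fundamental solution kernel `Q^l` of the Stokes system -/
def Qker (n : ℕ) (l : Fin n) (x : Eu n) : ℝ := x l / ‖x‖ ^ n

/-- volume `|B₁|` of the unit ball -/
def ballVol (n : ℕ) : ℝ := (volume (ball (0 : Eu n) 1)).toReal

/-- surface area `|∂B₁|` of the unit sphere -/
def sphVol (n : ℕ) : ℝ := (μH[(n : ℝ) - 1] (sphere (0 : Eu n) 1)).toReal

/-- the Newton potential -/
def Nker (n : ℕ) (x : Eu n) : ℝ := (1 / (((n : ℝ) - 2) * sphVol n)) / ‖x‖ ^ (n - 2)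


/-! ## STATEMENT 17: Hölder's inequality in variable exponent spaces -/

private lemma young_var {a b P Q S : ℝ} (ha : 0 ≤ a) (hb : 0 ≤ b)
    (hP : 1 ≤ P) (hQ : 1 ≤ Q) (hS : 1 ≤ S) (h : 1 / S = 1 / P + 1 / Q) :
    (a * b) ^ S ≤ a ^ P + b ^ Q := by
  have hS0 : 0 < S := lt_of_lt_of_le zero_lt_one hS
  have hP0 : 0 < P := lt_of_lt_of_le zero_lt_one hP
  have hQ0 : 0 < Q := lt_of_lt_of_le zero_lt_one hQ
  have hSP : S < P := by
    have h1 : 1 / P < 1 / S := by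
      have := one_div_pos.2 hQ0
      linarith
    rw [one_div, one_div] at h1
    exact (inv_lt_inv₀ hP0 hS0).1 h1
  have hSQ : S < Q := by
    have h1 : 1 / Q < 1 / S := by
      have := one_div_pos.2 hP0
      linarith
    rw [one_div, one_div] at h1
    exact (inv_lt_inv₀ hQ0 hS0).1 h1
  have hconj : (P / S).HolderConjugate (Q / S) := by
    rw [Real.holderConjugate_iff]
    constructor
    · exact (one_lt_div hS0).2 hSP
    · rw [inv_div, inv_div]
      field_simp
      field_simp at h
      nlinarith [h]
  have hy := Real.young_inequality_of_nonneg (Real.rpow_nonneg ha S)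
    (Real.rpow_nonneg hb S) hconj
  have e1 : (a ^ S) ^ (P / S) = a ^ P := by
    rw [← Real.rpow_mul ha]
    congr 1
    field_simp
  have e2 : (b ^ S) ^ (Q / S) = b ^ Q := by
    rw [← Real.rpow_mul hb]
    congr 1
    field_simp
  have hPS1 : 1 ≤ P / S := (one_le_div hS0).2 hSP.le
  have hQS1 : 1 ≤ Q / S := (one_le_div hS0).2 hSQ.le
  calc (a * b) ^ S = a ^ S * b ^ S := Real.mul_rpow ha hb
    _ ≤ (a ^ S) ^ (P / S) / (P / S) + (b ^ S) ^ (Q / S) / (Q / S) := hy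
    _ = a ^ P / (P / S) + b ^ Q / (Q / S) := by rw [e1, e2]
    _ ≤ a ^ P + b ^ Q := by
        gcongr
        · exact div_le_self (Real.rpow_nonneg ha P) hPS1
        · exact div_le_self (Real.rpow_nonneg hb Q) hQS1

private lemma young_var2 {a b P Q S : ℝ} (ha : 0 ≤ a) (hb : 0 ≤ b)
    (hP : 1 ≤ P) (hQ : 1 ≤ Q) (hS : 1 ≤ S) (h : 1 / S = 1 / P + 1 / Q) :
    (a * b / 2) ^ S ≤ (a ^ P + b ^ Q) / 2 := by
  have h1 : (a * b / 2) ^ S = (a * b) ^ S / 2 ^ S :=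
    Real.div_rpow (mul_nonneg ha hb) (by norm_num) _
  have h2 : (2 : ℝ) ≤ 2 ^ S := by
    calc (2 : ℝ) = 2 ^ (1 : ℝ) := (Real.rpow_one 2).symm
      _ ≤ 2 ^ S := Real.rpow_le_rpow_of_exponent_le (by norm_num) hS
  rw [h1]
  exact div_le_div₀ (by positivity) (young_var ha hb hP hQ hS h) two_pos h2

private lemma modMeas {n : ℕ} {Ω : Set (Eu n)} {p f : Eu n → ℝ}
    (hf : AEMeasurable f (volume.restrict Ω)) (hp : Measurable p) :
    AEMeasurable (fun x => ENNReal.ofReal (|f x| ^ p x)) (volume.restrict Ω) :=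
  ((measurable_abs.comp_aemeasurable hf).pow hp.aemeasurable).ennreal_ofReal

/-- scaling the function down by `l ≥ 1` scales the modular down at least by `l` -/
private lemma sScale {n : ℕ} {Ω : Set (Eu n)} (hΩm : MeasurableSet Ω) {p f : Eu n → ℝ}
    (hp1 : ∀ x ∈ Ω, 1 ≤ p x) {l : ℝ} (hl : 1 ≤ l) :
    vMod Ω p (fun x => f x / l) ≤ vMod Ω p f * (ENNReal.ofReal l)⁻¹ := by
  have hl0 : 0 < l := lt_of_lt_of_le zero_lt_one hl
  unfold vMod
  rw [← lintegral_mul_const' _ _ (by simp [hl0] : (ENNReal.ofReal l)⁻¹ ≠ ⊤)]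
  refine lintegral_mono_ae ?_
  filter_upwards [ae_restrict_of_forall_mem hΩm hp1] with x hx
  have h1 : |f x / l| ^ p x = |f x| ^ p x / l ^ p x := by
    rw [abs_div, abs_of_pos hl0, Real.div_rpow (abs_nonneg _) hl0.le]
  have h2 : l ≤ l ^ p x := by
    calc l = l ^ (1 : ℝ) := (Real.rpow_one l).symm
      _ ≤ l ^ p x := Real.rpow_le_rpow_of_exponent_le hl hx
  have h3 : |f x| ^ p x / l ^ p x ≤ |f x| ^ p x / l :=
    div_le_div_of_nonneg_left (Real.rpow_nonneg (abs_nonneg _) _) hl0 h2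
  calc ENNReal.ofReal (|f x / l| ^ p x) ≤ ENNReal.ofReal (|f x| ^ p x / l) := by
        rw [h1]; exact ENNReal.ofReal_le_ofReal h3
    _ = ENNReal.ofReal (|f x| ^ p x) * (ENNReal.ofReal l)⁻¹ := by
        rw [ENNReal.ofReal_div_of_pos hl0, div_eq_mul_inv]

/-- the set defining the Luxemburg norm is nonempty for `f` with finite modular -/
private lemma setNonempty {n : ℕ} {Ω : Set (Eu n)} (hΩm : MeasurableSet Ω)
    {p f : Eu n → ℝ} (hp1 : ∀ x ∈ Ω, 1 ≤ p x) (hfin : vMod Ω p f < ⊤) :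
    ∃ l : ℝ, 0 < l ∧ vMod Ω p (fun x => f x / l) ≤ 1 := by
  set l : ℝ := (vMod Ω p f).toReal + 1 with hldef
  have htR : (0 : ℝ) ≤ (vMod Ω p f).toReal := ENNReal.toReal_nonneg
  have hl1 : (1 : ℝ) ≤ l := le_add_of_nonneg_left htR
  refine ⟨l, lt_of_lt_of_le zero_lt_one hl1, ?_⟩
  have hle : vMod Ω p f ≤ ENNReal.ofReal l := by
    calc vMod Ω p f = ENNReal.ofReal (vMod Ω p f).toReal :=
          (ENNReal.ofReal_toReal hfin.ne).symm
      _ ≤ ENNReal.ofReal l := ENNReal.ofReal_le_ofReal (by simp [hldef])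
  calc vMod Ω p (fun x => f x / l) ≤ vMod Ω p f * (ENNReal.ofReal l)⁻¹ :=
        sScale hΩm hp1 hl1
    _ ≤ 1 := by
        rw [← div_eq_mul_inv]
        exact ENNReal.div_le_of_le_mul (by rwa [one_mul])

/-- the a.e. pointwise Young estimate for the modular of a product -/
private lemma keyMod {n : ℕ} {Ω : Set (Eu n)} (hΩm : MeasurableSet Ω)
    {p q s f g : Eu n → ℝ} (hpm : Measurable p)
    (hp1 : ∀ x ∈ Ω, 1 ≤ p x) (hq1 : ∀ x ∈ Ω, 1 ≤ q x) (hs1 : ∀ x ∈ Ω, 1 ≤ s x)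
    (hpqs : ∀ x ∈ Ω, 1 / s x = 1 / p x + 1 / q x)
    (hfm : AEMeasurable f (volume.restrict Ω))
    {A B : ℝ} (hA : 0 < A) (hB : 0 < B)
    (h1 : vMod Ω p (fun x => f x / A) ≤ 1) (h2 : vMod Ω q (fun x => g x / B) ≤ 1) :
    vMod Ω s (fun x => f x * g x / (2 * A * B)) ≤ 1 := by
  have meas1 : AEMeasurable (fun x => ENNReal.ofReal (|f x / A| ^ p x))
      (volume.restrict Ω) := modMeas (hfm.div_const A) hpm
  have step : vMod Ω s (fun x => f x * g x / (2 * A * B)) ≤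
      (vMod Ω p (fun x => f x / A) + vMod Ω q (fun x => g x / B)) / 2 := by
    unfold vMod
    calc (∫⁻ x in Ω, ENNReal.ofReal (|f x * g x / (2 * A * B)| ^ s x))
        ≤ ∫⁻ x in Ω, (ENNReal.ofReal (|f x / A| ^ p x) +
            ENNReal.ofReal (|g x / B| ^ q x)) / 2 := by
          refine lintegral_mono_ae ?_
          filter_upwards [ae_restrict_of_forall_mem hΩm hp1,
            ae_restrict_of_forall_mem hΩm hq1, ae_restrict_of_forall_mem hΩm hs1,
            ae_restrict_of_forall_mem hΩm hpqs] with x h1x h2x h3x h4x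
          have hy := young_var2 (a := |f x| / A) (b := |g x| / B)
            (by positivity) (by positivity) h1x h2x h3x h4x
          have e1 : |f x * g x / (2 * A * B)| = |f x| / A * (|g x| / B) / 2 := by
            rw [abs_div, abs_mul, abs_of_pos (by positivity : (0:ℝ) < 2 * A * B)]
            rw [div_mul_div_comm, div_div]
            ring_nf
          have e2 : |f x / A| = |f x| / A := by rw [abs_div, abs_of_pos hA]
          have e3 : |g x / B| = |g x| / B := by rw [abs_div, abs_of_pos hB]
          rw [e1, e2, e3]
          calc ENNReal.ofReal ((|f x| / A * (|g x| / B) / 2) ^ s x)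
              ≤ ENNReal.ofReal (((|f x| / A) ^ p x + (|g x| / B) ^ q x) / 2) :=
                ENNReal.ofReal_le_ofReal hy
            _ = ENNReal.ofReal ((|f x| / A) ^ p x + (|g x| / B) ^ q x) / 2 := by
                rw [ENNReal.ofReal_div_of_pos two_pos]
                norm_num
            _ ≤ (ENNReal.ofReal ((|f x| / A) ^ p x) +
                  ENNReal.ofReal ((|g x| / B) ^ q x)) / 2 :=
                ENNReal.div_le_div_right (ENNReal.ofReal_add_le) 2
      _ = ((∫⁻ x in Ω, ENNReal.ofReal (|f x / A| ^ p x)) +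
            ∫⁻ x in Ω, ENNReal.ofReal (|g x / B| ^ q x)) / 2 := by
          simp_rw [ENNReal.div_eq_inv_mul]
          rw [lintegral_const_mul' _ _ (by simp : (2 : ℝ≥0∞)⁻¹ ≠ ⊤),
            lintegral_add_left' meas1]
  refine le_trans step ?_
  calc (vMod Ω p (fun x => f x / A) + vMod Ω q (fun x => g x / B)) / 2
      ≤ (1 + 1) / 2 := by gcongr
    _ = 1 := by
        rw [one_add_one_eq_two]
        exact ENNReal.div_self (by norm_num) (by norm_num)

theorem holder_vLp
    {n : ℕ} (Ω : Set (Eu n)) (hΩ : IsDomain Ω) (p q s : Eu n → ℝ)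
    (hp : IsBddExp Ω p) (hq : IsBddExp Ω q) (hs : IsBddExp Ω s)
    (hpqs : ∀ x ∈ Ω, 1 / s x = 1 / p x + 1 / q x) :
    ∀ f g : Eu n → ℝ, MemVL Ω p f → MemVL Ω q g →
      MemVL Ω s (fun x => f x * g x) ∧
      vNorm Ω s (fun x => f x * g x) ≤ 2 * vNorm Ω p f * vNorm Ω q g := by
  obtain ⟨hpm, hp1, -⟩ := hp
  obtain ⟨hqm, hq1, -⟩ := hq
  obtain ⟨hsm, hs1, -⟩ := hs
  have hΩm : MeasurableSet Ω := hΩ.1.measurableSet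
  intro f g hf hg
  obtain ⟨hfm, hffin⟩ := hf
  obtain ⟨hgm, hgfin⟩ := hg
  -- finiteness of the modular of the product
  have hprod : vMod Ω s (fun x => f x * g x) ≤ vMod Ω p f + vMod Ω q g := by
    unfold vMod
    calc (∫⁻ x in Ω, ENNReal.ofReal (|f x * g x| ^ s x))
        ≤ ∫⁻ x in Ω, (ENNReal.ofReal (|f x| ^ p x) + ENNReal.ofReal (|g x| ^ q x)) := by
          refine lintegral_mono_ae ?_
          filter_upwards [ae_restrict_of_forall_mem hΩm hp1,
            ae_restrict_of_forall_mem hΩm hq1, ae_restrict_of_forall_mem hΩm hs1,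
            ae_restrict_of_forall_mem hΩm hpqs] with x h1x h2x h3x h4x
          have hy := young_var (abs_nonneg (f x)) (abs_nonneg (g x)) h1x h2x h3x h4x
          calc ENNReal.ofReal (|f x * g x| ^ s x)
              = ENNReal.ofReal ((|f x| * |g x|) ^ s x) := by rw [abs_mul]
            _ ≤ ENNReal.ofReal (|f x| ^ p x + |g x| ^ q x) := ENNReal.ofReal_le_ofReal hy
            _ ≤ _ := ENNReal.ofReal_add_le
      _ = _ := lintegral_add_left' (modMeas hfm hpm) _
  have memb : MemVL Ω s (fun x => f x * g x) :=
    ⟨hfm.mul hgm, lt_of_le_of_lt hprod (ENNReal.add_lt_top.2 ⟨hffin, hgfin⟩)⟩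
  refine ⟨memb, ?_⟩
  -- the norm inequality
  have hSfne : {l : ℝ | 0 < l ∧ vMod Ω p (fun x => f x / l) ≤ 1}.Nonempty :=
    setNonempty hΩm hp1 hffin
  have hSgne : {l : ℝ | 0 < l ∧ vMod Ω q (fun x => g x / l) ≤ 1}.Nonempty :=
    setNonempty hΩm hq1 hgfin
  have hA0 : 0 ≤ vNorm Ω p f := le_csInf hSfne fun l hl => hl.1.le
  have hB0 : 0 ≤ vNorm Ω q g := le_csInf hSgne fun l hl => hl.1.le
  have key : ∀ ε : ℝ, 0 < ε → vNorm Ω s (fun x => f x * g x) ≤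
      2 * (vNorm Ω p f + ε) * (vNorm Ω q g + ε) := by
    intro ε hε
    obtain ⟨a, ha, haε⟩ := exists_lt_of_csInf_lt hSfne
      (show sInf _ < vNorm Ω p f + ε by
        have : vNorm Ω p f = sInf {l : ℝ | 0 < l ∧ vMod Ω p (fun x => f x / l) ≤ 1} := rfl
        linarith [this.ge])
    obtain ⟨b, hb, hbε⟩ := exists_lt_of_csInf_lt hSgne
      (show sInf _ < vNorm Ω q g + ε by
        have : vNorm Ω q g = sInf {l : ℝ | 0 < l ∧ vMod Ω q (fun x => g x / l) ≤ 1} := rfl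
        linarith [this.ge])
    have hmem : vNorm Ω s (fun x => f x * g x) ≤ 2 * a * b := by
      refine csInf_le ⟨0, fun l hl => hl.1.le⟩ ⟨mul_pos (mul_pos two_pos ha.1) hb.1, ?_⟩
      exact keyMod hΩm hpm hp1 hq1 hs1 hpqs hfm ha.1 hb.1 ha.2 hb.2
    refine le_trans hmem ?_
    have hb0 : 0 ≤ b := hb.1.le
    have hab : a * b ≤ (vNorm Ω p f + ε) * (vNorm Ω q g + ε) :=
      mul_le_mul haε.le hbε.le hb0 (by linarith)
    nlinarith [hab]
  refine le_of_forall_pos_le_add fun ε hε => ?_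
  set A := vNorm Ω p f
  set B := vNorm Ω q g
  set δ : ℝ := min 1 (ε / (2 * (A + B) + 2)) with hδdef
  have hden : (0:ℝ) < 2 * (A + B) + 2 := by linarith
  have hδ0 : 0 < δ := lt_min one_pos (div_pos hε hden)
  have h1 := key δ hδ0
  have hδ1 : δ ≤ 1 := min_le_left _ _
  have hδ2 : δ ≤ ε / (2 * (A + B) + 2) := min_le_right _ _
  have h3 : δ * (2 * (A + B) + 2) ≤ ε := by
    rw [← le_div_iff₀ hden]
    exact hδ2
  have hd : 2 * (A + δ) * (B + δ) ≤ 2 * A * B + ε := by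
    nlinarith [hA0, hB0, hδ0.le, hδ1, h3, mul_le_mul_of_nonneg_left hδ1 hδ0.le]
  linarith

end VarExp
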